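/- Let H be a finite TTSP graph with source s and target t such that s and t are non-adjacent in H. If H admits an L-shape drawing or a rectangular drawing, then the graph obtained from H by adding the edge st admits a proper square-contact representation. -/

import Mathlib

open Set

structure AxSquare where
  x : ℝ
  y : ℝ
  side : ℝ
  side_pos : 0 < side

namespace AxSquare
def left (S : AxSquare) : ℝ := S.x
def right (S : AxSquare) : ℝ := S.x + S.side
def bottom (S : AxSquare) : ℝ := S.y
def top (S : AxSquare) : ℝ := S.y + S.side
/-- The square as a subset of the plane. -/
def toSet (S : AxSquare) : Set (ℝ × ℝ) :=
  Set.Icc S.x (S.x + S.side) ×ˢ Set.Icc S.y (S.y + S.side)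
end AxSquare

/-- A proper square-contact representation of `G`, restricted to the vertex set `A`. -/
def IsSCROn {V : Type} (G : SimpleGraph V) (A : Set V) (Sq : V → AxSquare) : Prop :=
  (∀ u ∈ A, ∀ v ∈ A, u ≠ v → interior (Sq u).toSet ∩ interior (Sq v).toSet = ∅) ∧
  (∀ u ∈ A, ∀ v ∈ A, G.Adj u v → ((Sq u).toSet ∩ (Sq v).toSet).Infinite) ∧
  (∀ u ∈ A, ∀ v ∈ A, u ≠ v → ¬ G.Adj u v → (Sq u).toSet ∩ (Sq v).toSet = ∅)

/-- `G` admits a proper square-contact representation. -/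
def HasSCR {V : Type} (G : SimpleGraph V) : Prop :=
  ∃ Sq : V → AxSquare, IsSCROn G Set.univ Sq

/-! ### SPQ-trees of two-terminal series-parallel graphs -/

mutual
/-- A (canonical) SPQ decomposition tree over the vertex type `V`.  Each node stores
its source and its target. -/
inductive SPQ (V : Type) : Type where
  | Q : V → V → SPQ V
  | S : V → V → SPQList V → SPQ V
  | P : V → V → SPQList V → SPQ V
inductive SPQList (V : Type) : Type where
  | nil : SPQList V
  | cons : SPQ V → SPQList V → SPQList V
end

namespace SPQList
def toList {V : Type} : SPQList V → List (SPQ V)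
  | .nil => []
  | .cons c cs => c :: cs.toList
end SPQList

namespace SPQ

def src {V : Type} : SPQ V → V
  | .Q s _ => s
  | .S s _ _ => s
  | .P s _ _ => s

def tgt {V : Type} : SPQ V → V
  | .Q _ t => t
  | .S _ t _ => t
  | .P _ t _ => t

def isQ {V : Type} : SPQ V → Prop
  | .Q _ _ => True
  | _ => False

def isS {V : Type} : SPQ V → Prop
  | .S _ _ _ => True
  | _ => False

def isP {V : Type} : SPQ V → Prop
  | .P _ _ _ => True
  | _ => False

def children {V : Type} : SPQ V → List (SPQ V)
  | .Q _ _ => []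
  | .S _ _ cs => cs.toList
  | .P _ _ cs => cs.toList

end SPQ

mutual
/-- The vertex set of the pertinent graph of an SPQ node. -/
def SPQ.vertSet {V : Type} : SPQ V → Set V
  | .Q s t => {s, t}
  | .S s t cs => {s, t} ∪ SPQList.vertSetL cs
  | .P s t cs => {s, t} ∪ SPQList.vertSetL cs
def SPQList.vertSetL {V : Type} : SPQList V → Set V
  | .nil => ∅
  | .cons c cs => SPQ.vertSet c ∪ SPQList.vertSetL cs
end

mutual
/-- The (one-directional) adjacency of the pertinent graph of an SPQ node. -/
def SPQ.adjRel {V : Type} : SPQ V → V → V → Prop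
  | .Q s t, u, v => u = s ∧ v = t
  | .S _ _ cs, u, v => SPQList.adjRelL cs u v
  | .P _ _ cs, u, v => SPQList.adjRelL cs u v
def SPQList.adjRelL {V : Type} : SPQList V → V → V → Prop
  | .nil, _, _ => False
  | .cons c cs, u, v => SPQ.adjRel c u v ∨ SPQList.adjRelL cs u v
end

/-- The pertinent graph `G_μ` of an SPQ node `μ`, as a simple graph on the ambient
vertex type (vertices outside `μ.vertSet` are isolated). -/
def SPQ.pertinentGraph {V : Type} (μ : SPQ V) : SimpleGraph V where
  Adj u v := u ≠ v ∧ (μ.adjRel u v ∨ μ.adjRel v u)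
  symm := ⟨fun _ _ h => ⟨h.1.symm, h.2.symm⟩⟩
  loopless := ⟨fun _ h => h.1 rfl⟩

/-- The pertinent graph of `μ` contains the edge between the two terminals of `μ`. -/
def SPQ.hasTermEdge {V : Type} (μ : SPQ V) : Prop :=
  μ.pertinentGraph.Adj μ.src μ.tgt

/-- `chainFrom t s l`: the list `l` of SPQ nodes forms a series chain from the
terminal `t` to the terminal `s` (the node listed first is incident to `t`). -/
def SPQ.chainFrom {V : Type} (t s : V) : List (SPQ V) → Prop
  | [] => False
  | [c] => SPQ.tgt c = t ∧ SPQ.src c = s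
  | c :: c' :: rest => SPQ.tgt c = t ∧ SPQ.chainFrom (SPQ.src c) s (c' :: rest)

/-- Vertex sets of the members of a series chain meet only in the shared terminals of
consecutive members. -/
def SPQ.seriesPairwise {V : Type} (l : List (SPQ V)) : Prop :=
  ∀ i j : Fin l.length, (i : ℕ) < (j : ℕ) →
    (l.get i).vertSet ∩ (l.get j).vertSet ⊆
      (if (j : ℕ) = (i : ℕ) + 1 then {(l.get i).src} else (∅ : Set V))

mutual
/-- Well-formedness of an SPQ tree: it encodes a genuine (canonical) SPQ
decomposition of a two-terminal series-parallel graph. -/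
def SPQ.WF {V : Type} : SPQ V → Prop
  | .Q s t => s ≠ t
  | .S s t cs =>
      s ≠ t ∧ 2 ≤ cs.toList.length ∧ SPQList.WFL cs ∧
      (∀ c ∈ cs.toList, SPQ.isP c ∨ SPQ.isQ c) ∧
      SPQ.chainFrom t s cs.toList ∧ SPQ.seriesPairwise cs.toList
  | .P s t cs =>
      s ≠ t ∧ 2 ≤ cs.toList.length ∧ SPQList.WFL cs ∧
      (∀ c ∈ cs.toList, SPQ.isS c ∨ SPQ.isQ c) ∧
      (∀ c ∈ cs.toList, SPQ.src c = s ∧ SPQ.tgt c = t) ∧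
      (∀ i j : Fin cs.toList.length, (i : ℕ) < (j : ℕ) →
        (cs.toList.get i).vertSet ∩ (cs.toList.get j).vertSet ⊆ ({s, t} : Set V)) ∧
      (∀ i j : Fin cs.toList.length,
        SPQ.isQ (cs.toList.get i) → SPQ.isQ (cs.toList.get j) → i = j)
def SPQList.WFL {V : Type} : SPQList V → Prop
  | .nil => True
  | .cons c cs => SPQ.WF c ∧ SPQList.WFL cs
end

mutual
/-- `ν` is a node of the SPQ tree rooted at the given node. -/
def SPQ.MemTree {V : Type} (ν : SPQ V) : SPQ V → Prop
  | .Q s t => ν = .Q s t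
  | .S s t cs => ν = .S s t cs ∨ SPQList.MemTreeL ν cs
  | .P s t cs => ν = .P s t cs ∨ SPQList.MemTreeL ν cs
def SPQList.MemTreeL {V : Type} (ν : SPQ V) : SPQList V → Prop
  | .nil => False
  | .cons c cs => SPQ.MemTree ν c ∨ SPQList.MemTreeL ν cs
end

/-- At most two entries of `l` satisfy `Pr`. -/
def AtMostTwoOn {α : Type} (Pr : α → Prop) (l : List α) : Prop :=
  ∀ i j k : Fin l.length, Pr (l.get i) → Pr (l.get j) → Pr (l.get k) →
    i = j ∨ i = k ∨ j = k

/-- Exactly two entries of `l` satisfy `Pr`. -/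
def ExactlyTwoOn {α : Type} (Pr : α → Prop) (l : List α) : Prop :=
  ∃ i j : Fin l.length, i ≠ j ∧ Pr (l.get i) ∧ Pr (l.get j) ∧
    ∀ k : Fin l.length, Pr (l.get k) → k = i ∨ k = j

/-- Exactly one entry of `l` satisfies `Pr`. -/
def ExactlyOneOn {α : Type} (Pr : α → Prop) (l : List α) : Prop :=
  ∃ i : Fin l.length, Pr (l.get i) ∧ ∀ k : Fin l.length, Pr (l.get k) → k = i

namespace SPQ

/-- A critical S-node: it has exactly two children and both children's pertinent
graphs contain the edge between their own terminals. -/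
def IsCriticalS {V : Type} (μ : SPQ V) : Prop :=
  μ.isS ∧ μ.children.length = 2 ∧ ∀ c ∈ μ.children, SPQ.hasTermEdge c

/-- A bad P-node: its pertinent graph contains the edge between its terminals and it
has exactly two critical S-node children. -/
def IsBadP {V : Type} (μ : SPQ V) : Prop :=
  μ.isP ∧ μ.hasTermEdge ∧ ExactlyTwoOn SPQ.IsCriticalS μ.children

/-- An almost-bad P-node: its pertinent graph contains the edge between its terminals
and it has exactly one critical S-node child. -/
def IsAlmostBadP {V : Type} (μ : SPQ V) : Prop :=
  μ.isP ∧ μ.hasTermEdge ∧ ExactlyOneOn SPQ.IsCriticalS μ.children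

/-- A forbidden P-node: its pertinent graph contains the edge between its terminals
and it has more than two critical S-node children. -/
def IsForbiddenP {V : Type} (μ : SPQ V) : Prop :=
  μ.isP ∧ μ.hasTermEdge ∧ ¬ AtMostTwoOn SPQ.IsCriticalS μ.children

/-- A good P-node: one that is neither almost bad, nor bad, nor forbidden. -/
def IsGoodP {V : Type} (μ : SPQ V) : Prop :=
  μ.isP ∧ ¬ μ.IsAlmostBadP ∧ ¬ μ.IsBadP ∧ ¬ μ.IsForbiddenP

/-- Type A S-node. -/
def IsTypeA {V : Type} (μ : SPQ V) : Prop :=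
  μ.isS ∧ (2 < μ.children.length ∨
    (μ.children.length = 2 ∧ ∃ c ∈ μ.children, ¬ SPQ.hasTermEdge c))

/-- Type B S-node. -/
def IsTypeB {V : Type} (μ : SPQ V) : Prop :=
  μ.isS ∧ μ.children.length = 2 ∧ (∀ c ∈ μ.children, SPQ.hasTermEdge c) ∧
    ∃ c ∈ μ.children, SPQ.IsBadP c

/-- Type C S-node. -/
def IsTypeC {V : Type} (μ : SPQ V) : Prop :=
  μ.isS ∧ μ.children.length = 2 ∧ (∀ c ∈ μ.children, SPQ.hasTermEdge c) ∧
    ∀ c ∈ μ.children, ¬ SPQ.IsBadP c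

end SPQ

/-- The series-parallel graph obtained from the two-terminal series-parallel graph of
the SPQ tree `τ` by adding the reference edge between its terminals. -/
def spGraph {V : Type} (τ : SPQ V) : SimpleGraph V :=
  τ.pertinentGraph ⊔ SimpleGraph.fromEdgeSet {s(τ.src, τ.tgt)}

/-- `H` is a two-terminal series-parallel graph with vertex set `A`, source `s` and
target `t`: it is the pertinent graph of some well-formed SPQ tree. -/
def IsTTSPWith {V : Type} (H : SimpleGraph V) (A : Set V) (s t : V) : Prop :=
  ∃ μ : SPQ V, SPQ.WF μ ∧ μ.src = s ∧ μ.tgt = t ∧ μ.vertSet = A ∧ μ.pertinentGraph = H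

/-! ### Drawings -/

/-- Two squares have a pair of collinear sides and lie on opposite sides of the line
through those sides. -/
def SepCollinear (A B : AxSquare) : Prop :=
  A.right = B.left ∨ B.right = A.left ∨ A.top = B.bottom ∨ B.top = A.bottom

/-- Property (*): for every internal vertex `v`, if `S(v)` has a side collinear with a
side of `S(s)` (resp. `S(t)`) and the two squares lie on opposite sides of the line
through that side, then `v` is adjacent to `s` (resp. `t`). -/
def PropertyStar {V : Type} (G : SimpleGraph V) (A : Set V) (s t : V)
    (Sq : V → AxSquare) : Prop :=
  ∀ v ∈ A \ ({s, t} : Set V),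
    (SepCollinear (Sq v) (Sq s) → G.Adj v s) ∧
    (SepCollinear (Sq v) (Sq t) → G.Adj v t)

/-- H0 drawing. -/
def IsH0Drawing {V : Type} (G : SimpleGraph V) (A : Set V) (s t : V)
    (Sq : V → AxSquare) : Prop :=
  IsSCROn G A Sq ∧ PropertyStar G A s t Sq ∧
  (Sq t).right ≤ (Sq s).left ∧
  (Sq s).bottom < (Sq t).bottom ∧
  ∀ v ∈ A \ ({s, t} : Set V),
    (Sq t).right ≤ (Sq v).left ∧ (Sq v).top ≤ (Sq t).top ∧
    (Sq s).bottom ≤ (Sq v).bottom ∧ (Sq v).right ≤ (Sq s).right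

/-- V0 drawing. -/
def IsV0Drawing {V : Type} (G : SimpleGraph V) (A : Set V) (s t : V)
    (Sq : V → AxSquare) : Prop :=
  IsSCROn G A Sq ∧ PropertyStar G A s t Sq ∧
  (Sq s).top ≤ (Sq t).bottom ∧
  (Sq t).left < (Sq s).left ∧
  ∀ v ∈ A \ ({s, t} : Set V),
    (Sq s).top ≤ (Sq v).bottom ∧ (Sq s).left ≤ (Sq v).left ∧
    (Sq v).top ≤ (Sq t).top ∧ (Sq v).right ≤ (Sq s).right

/-- H1 drawing. -/
def IsH1Drawing {V : Type} (G : SimpleGraph V) (A : Set V) (s t : V)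
    (Sq : V → AxSquare) : Prop :=
  IsSCROn G A Sq ∧ PropertyStar G A s t Sq ∧
  (Sq t).right ≤ (Sq s).left ∧
  (Sq t).bottom < (Sq s).bottom ∧
  ∀ v ∈ A \ ({s, t} : Set V),
    (Sq t).right ≤ (Sq v).left ∧ (Sq v).top ≤ (Sq t).top ∧
    (Sq t).bottom ≤ (Sq v).bottom ∧ (Sq v).right ≤ (Sq s).right

/-- H1◊ drawing. -/
def IsH1DiamondDrawing {V : Type} (G : SimpleGraph V) (A : Set V) (s t : V)
    (Sq : V → AxSquare) : Prop :=
  IsSCROn G A Sq ∧ PropertyStar G A s t Sq ∧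
  (Sq t).right ≤ (Sq s).left ∧
  (Sq s).bottom < (Sq t).bottom ∧
  ∀ v ∈ A \ ({s, t} : Set V),
    (Sq t).right ≤ (Sq v).left ∧ (Sq v).top ≤ (Sq t).top ∧
    (Sq s).top ≤ (Sq v).bottom ∧ (Sq v).right ≤ (Sq s).right

/-- V1 drawing. -/
def IsV1Drawing {V : Type} (G : SimpleGraph V) (A : Set V) (s t : V)
    (Sq : V → AxSquare) : Prop :=
  IsSCROn G A Sq ∧ PropertyStar G A s t Sq ∧
  (Sq s).top ≤ (Sq t).bottom ∧
  ∀ v ∈ A \ ({s, t} : Set V),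
    (Sq s).top ≤ (Sq v).bottom ∧ (Sq v).top ≤ (Sq t).top ∧
    (Sq s).left ≤ (Sq v).left ∧ (Sq v).right ≤ (Sq s).right

/-- D1 drawing. -/
def IsD1Drawing {V : Type} (G : SimpleGraph V) (A : Set V) (s t : V)
    (Sq : V → AxSquare) : Prop :=
  IsSCROn G A Sq ∧ PropertyStar G A s t Sq ∧
  (Sq s).top ≤ (Sq t).bottom ∧
  (Sq t).left < (Sq s).left ∧
  ∀ v ∈ A \ ({s, t} : Set V),
    (Sq t).left ≤ (Sq v).left ∧ (Sq v).top ≤ (Sq t).top ∧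
    (Sq s).bottom ≤ (Sq v).bottom ∧ (Sq v).right ≤ (Sq s).right

/-- D1◊ drawing: a D1 drawing in which all internal squares lie to the right of `S(t)`. -/
def IsD1DiamondDrawing {V : Type} (G : SimpleGraph V) (A : Set V) (s t : V)
    (Sq : V → AxSquare) : Prop :=
  IsD1Drawing G A s t Sq ∧
  ∀ v ∈ A \ ({s, t} : Set V), (Sq t).right ≤ (Sq v).left

/-- Rectangular drawing. -/
def IsRectangularDrawing {V : Type} (G : SimpleGraph V) (A : Set V) (s t : V)
    (Sq : V → AxSquare) : Prop :=
  IsSCROn G A Sq ∧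
  (Sq t).right ≤ (Sq s).left ∧ (Sq s).top ≤ (Sq t).bottom ∧
  (∀ v ∈ A \ ({s, t} : Set V),
    (Sq t).right ≤ (Sq v).left ∧ (Sq s).top ≤ (Sq v).bottom) ∧
  (∀ v ∈ A \ ({s, t} : Set V),
    (Sq v).left = (Sq t).right → ((Sq v).toSet ∩ (Sq t).toSet).Infinite) ∧
  (∀ v ∈ A \ ({s, t} : Set V),
    (Sq v).bottom = (Sq s).top → ((Sq v).toSet ∩ (Sq s).toSet).Infinite)

/-- L-shape drawing: a rectangular drawing with an empty axis-aligned rectangle inside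
the bounding box of the internal squares, whose lower-left corner is at the
intersection of the line through the right side of `S(t)` and the line through the
top side of `S(s)`. -/
def IsLShapeDrawing {V : Type} (G : SimpleGraph V) (A : Set V) (s t : V)
    (Sq : V → AxSquare) : Prop :=
  IsRectangularDrawing G A s t Sq ∧
  ∃ X Y : ℝ, (Sq t).right < X ∧ (Sq s).top < Y ∧
    (∃ v ∈ A \ ({s, t} : Set V), X ≤ (Sq v).right) ∧
    (∃ v ∈ A \ ({s, t} : Set V), Y ≤ (Sq v).top) ∧
    ∀ v ∈ A \ ({s, t} : Set V),
      (Set.Ioo (Sq t).right X ×ˢ Set.Ioo (Sq s).top Y) ∩ (Sq v).toSet = ∅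

/-- Pipe drawing. -/
def IsPipeDrawing {V : Type} (G : SimpleGraph V) (A : Set V) (s t : V)
    (Sq : V → AxSquare) : Prop :=
  IsSCROn G A Sq ∧
  (Sq t).right ≤ (Sq s).left ∧
  (∀ v ∈ A \ ({s, t} : Set V),
    (Sq t).right ≤ (Sq v).left ∧ (Sq v).right ≤ (Sq s).left) ∧
  (∀ v ∈ A \ ({s, t} : Set V),
    (Sq v).left = (Sq t).right → ((Sq v).toSet ∩ (Sq t).toSet).Infinite) ∧
  (∀ v ∈ A \ ({s, t} : Set V),
    (Sq v).right = (Sq s).left → ((Sq v).toSet ∩ (Sq s).toSet).Infinite)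

section SCRHelpers

lemma sq_mem {S : AxSquare} {p : ℝ × ℝ} :
    p ∈ S.toSet ↔ (S.x ≤ p.1 ∧ p.1 ≤ S.x + S.side) ∧ (S.y ≤ p.2 ∧ p.2 ≤ S.y + S.side) := by
  simp only [AxSquare.toSet, Set.mem_prod, Set.mem_Icc]

lemma sq_interior (S : AxSquare) :
    interior S.toSet = Set.Ioo S.x (S.x + S.side) ×ˢ Set.Ioo S.y (S.y + S.side) := by
  rw [AxSquare.toSet, interior_prod_eq, interior_Icc, interior_Icc]

lemma int_disj_left {A B : AxSquare} (h : A.x + A.side ≤ B.x) :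
    interior A.toSet ∩ interior B.toSet = ∅ := by
  rw [sq_interior, sq_interior]
  ext p
  simp only [Set.mem_inter_iff, Set.mem_prod, Set.mem_Ioo, Set.mem_empty_iff_false, iff_false]
  rintro ⟨⟨⟨_, h1⟩, _⟩, ⟨h2, _⟩, _⟩; linarith

lemma int_disj_bottom {A B : AxSquare} (h : A.y + A.side ≤ B.y) :
    interior A.toSet ∩ interior B.toSet = ∅ := by
  rw [sq_interior, sq_interior]
  ext p
  simp only [Set.mem_inter_iff, Set.mem_prod, Set.mem_Ioo, Set.mem_empty_iff_false, iff_false]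
  rintro ⟨⟨_, _, h1⟩, _, h2, _⟩; linarith

lemma disj_left {A B : AxSquare} (h : A.x + A.side < B.x) :
    A.toSet ∩ B.toSet = ∅ := by
  ext p
  simp only [Set.mem_inter_iff, sq_mem, Set.mem_empty_iff_false, iff_false]
  rintro ⟨⟨⟨_, h1⟩, _⟩, ⟨h2, _⟩, _⟩; linarith

lemma disj_bottom {A B : AxSquare} (h : A.y + A.side < B.y) :
    A.toSet ∩ B.toSet = ∅ := by
  ext p
  simp only [Set.mem_inter_iff, sq_mem, Set.mem_empty_iff_false, iff_false]
  rintro ⟨⟨_, _, h1⟩, _, h2, _⟩; linarith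

lemma seg_infinite {l r c : ℝ} (h : l < r) :
    (Set.Icc l r ×ˢ ({c} : Set ℝ)).Infinite := by
  have h1 : (Set.Icc l r).Infinite := Set.Icc_infinite h
  have h2 : (fun x => (x, c)) '' Set.Icc l r ⊆ Set.Icc l r ×ˢ ({c} : Set ℝ) := by
    rintro p ⟨x, hx, rfl⟩; exact ⟨hx, rfl⟩
  exact ((h1.image (fun x _ y _ h => congrArg Prod.fst h))).mono h2

end SCRHelpers


theorem ttsp_valid_drawing_add_edge_hasSCR {V : Type} [Fintype V]
    (H : SimpleGraph V) (A : Set V) (s t : V)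
    (hT : IsTTSPWith H A s t) (hnadj : ¬ H.Adj s t)
    (hdraw : (∃ Sq : V → AxSquare, IsLShapeDrawing H A s t Sq) ∨
             (∃ Sq : V → AxSquare, IsRectangularDrawing H A s t Sq)) :
    ∃ Sq : V → AxSquare,
      IsSCROn (H ⊔ SimpleGraph.fromEdgeSet {s(s, t)}) A Sq := by
  classical
  obtain ⟨μ, hWF, hsrc, htgt, hA, hHeq⟩ := hT
  have hst : s ≠ t := by
    rw [← hsrc, ← htgt]
    cases μ with
    | Q a b => exact hWF
    | S a b cs => exact hWF.1
    | P a b cs => exact hWF.1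
  have hsA : s ∈ A := by
    rw [← hA, ← hsrc]
    cases μ <;> simp [SPQ.vertSet, SPQ.src]
  have htA : t ∈ A := by
    rw [← hA, ← htgt]
    cases μ <;> simp [SPQ.vertSet, SPQ.tgt]
  have hRect : ∃ Sq : V → AxSquare, IsRectangularDrawing H A s t Sq := by
    rcases hdraw with ⟨Sq, h⟩ | h
    · exact ⟨Sq, h.1⟩
    · exact h
  obtain ⟨Sq, ⟨hdisj, hadj, hnadjE⟩, hTS, hST, hbounds, hadjT, hadjS⟩ := hRect
  simp only [AxSquare.left, AxSquare.right, AxSquare.top, AxSquare.bottom]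
    at hTS hST hbounds hadjT hadjS
  -- abbreviations
  have ha : (0:ℝ) < (Sq t).y + (Sq t).side - ((Sq s).y + (Sq s).side) := by
    have := (Sq t).side_pos; linarith
  set a : ℝ := (Sq t).y + (Sq t).side - ((Sq s).y + (Sq s).side) with ha_def
  have hb : (0:ℝ) < (Sq s).x + (Sq s).side - ((Sq t).x + (Sq t).side - a) := by
    have := (Sq s).side_pos; linarith
  set b : ℝ := (Sq s).x + (Sq s).side - ((Sq t).x + (Sq t).side - a) with hb_def
  set Tn : AxSquare := ⟨(Sq t).x + (Sq t).side - a, (Sq s).y + (Sq s).side, a, ha⟩ with hTn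
  set Sn : AxSquare := ⟨(Sq t).x + (Sq t).side - a, (Sq s).y + (Sq s).side - b, b, hb⟩ with hSn
  set Sq' : V → AxSquare := fun v => if v = t then Tn else if v = s then Sn else Sq v with hSq'
  have hSq't : Sq' t = Tn := by simp [hSq']
  have hSq's : Sq' s = Sn := by simp [hSq', hst]
  have hSq'v : ∀ v, v ≠ s → v ≠ t → Sq' v = Sq v := by
    intro v h1 h2; simp [hSq', h1, h2]
  -- adjacency of the augmented graph
  have hGadj : ∀ u v : V, (H ⊔ SimpleGraph.fromEdgeSet {s(s, t)}).Adj u v ↔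
      H.Adj u v ∨ ((u = s ∧ v = t) ∨ (u = t ∧ v = s)) := by
    intro u v
    simp only [SimpleGraph.sup_adj, SimpleGraph.fromEdgeSet_adj, Set.mem_singleton_iff,
      Sym2.eq_iff]
    constructor
    · rintro (h | ⟨h, _⟩)
      · exact Or.inl h
      · exact Or.inr h
    · rintro (h | h)
      · exact Or.inl h
      · refine Or.inr ⟨h, ?_⟩
        rcases h with ⟨rfl, rfl⟩ | ⟨rfl, rfl⟩
        · exact hst
        · exact hst.symm
  have hmemI : ∀ v, v ∈ A → v ≠ s → v ≠ t → v ∈ A \ ({s, t} : Set V) := by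
    intro v hv h1 h2
    refine ⟨hv, ?_⟩
    simp [h1, h2]
  -- the segment where Tn and Sn touch
  have hTnSn : (Tn.toSet ∩ Sn.toSet).Infinite := by
    have hseg : (Set.Icc ((Sq t).x + (Sq t).side - a) ((Sq t).x + (Sq t).side)
        ×ˢ ({(Sq s).y + (Sq s).side} : Set ℝ)).Infinite := seg_infinite (by linarith)
    refine hseg.mono ?_
    rintro ⟨px, py⟩ ⟨hx, hy⟩
    simp only [Set.mem_singleton_iff] at hy
    subst hy
    simp only [Set.mem_Icc] at hx
    constructor
    · rw [sq_mem]
      simp only [hTn]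
      constructor
      · constructor <;> [exact hx.1; linarith [hx.2]]
      · constructor <;> linarith
    · rw [sq_mem]
      simp only [hSn]
      constructor
      · constructor <;> [exact hx.1; linarith [hx.2, hb_def, hTS, (Sq s).side_pos]]
      · constructor <;> linarith
  -- key contact preservation with t
  have keyT : ∀ v ∈ A, v ≠ s → v ≠ t → H.Adj t v → (Tn.toSet ∩ (Sq v).toSet).Infinite := by
    intro v hv h1 h2 hAdj
    have hold := hadj t htA v hv hAdj
    refine hold.mono ?_
    rintro p ⟨hp1, hp2⟩
    refine ⟨?_, hp2⟩
    rw [sq_mem] at hp1 hp2 ⊢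
    have hbv := hbounds v (hmemI v hv h1 h2)
    simp only [hTn]
    constructor
    · constructor <;> linarith [hp1.1.2, hp2.1.1, hbv.1, ha]
    · constructor <;> linarith [hp1.2.1, hp1.2.2, hST, ha_def]
  -- key contact preservation with s
  have keyS : ∀ v ∈ A, v ≠ s → v ≠ t → H.Adj s v → (Sn.toSet ∩ (Sq v).toSet).Infinite := by
    intro v hv h1 h2 hAdj
    have hold := hadj s hsA v hv hAdj
    refine hold.mono ?_
    rintro p ⟨hp1, hp2⟩
    refine ⟨?_, hp2⟩
    rw [sq_mem] at hp1 hp2 ⊢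
    have hbv := hbounds v (hmemI v hv h1 h2)
    simp only [hSn]
    constructor
    · constructor <;> linarith [hp1.1.1, hp1.1.2, hTS, ha, hb_def]
    · constructor <;> linarith [hp1.2.1, hp1.2.2, hbv.2, hb]
  -- key non-contact with t
  have keyT' : ∀ v ∈ A, v ≠ s → v ≠ t → ¬ H.Adj t v → Tn.toSet ∩ (Sq v).toSet = ∅ := by
    intro v hv h1 h2 hnA
    have hbv := hbounds v (hmemI v hv h1 h2)
    rcases lt_or_eq_of_le hbv.1 with hlt | heq
    · refine disj_left ?_
      simp only [hTn]
      linarith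
    · exfalso
      have hinf := hadjT v (hmemI v hv h1 h2) heq.symm
      have hemp := hnadjE v hv t htA h2 (fun h => hnA h.symm)
      exact hinf.nonempty.ne_empty hemp
  -- key non-contact with s
  have keyS' : ∀ v ∈ A, v ≠ s → v ≠ t → ¬ H.Adj s v → Sn.toSet ∩ (Sq v).toSet = ∅ := by
    intro v hv h1 h2 hnA
    have hbv := hbounds v (hmemI v hv h1 h2)
    rcases lt_or_eq_of_le hbv.2 with hlt | heq
    · refine disj_bottom ?_
      simp only [hSn]
      linarith
    · exfalso
      have hinf := hadjS v (hmemI v hv h1 h2) heq.symm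
      have hemp := hnadjE v hv s hsA h1 (fun h => hnA h.symm)
      exact hinf.nonempty.ne_empty hemp
  refine ⟨Sq', ?_, ?_, ?_⟩
  · -- interiors disjoint
    intro u hu v hv huv
    by_cases hut : u = t
    · by_cases hvs : v = s
      · rw [hut, hvs, hSq't, hSq's, Set.inter_comm]
        refine int_disj_bottom ?_
        simp only [hSn, hTn]; linarith
      · have hvt : v ≠ t := fun h => huv (hut.trans h.symm)
        rw [hut, hSq't, hSq'v v hvs hvt]
        refine int_disj_left ?_
        simp only [hTn]
        have hbv := hbounds v (hmemI v hv hvs hvt)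
        linarith [hbv.1]
    · by_cases hus : u = s
      · by_cases hvt : v = t
        · rw [hus, hvt, hSq't, hSq's]
          refine int_disj_bottom ?_
          simp only [hSn, hTn]; linarith
        · have hvs : v ≠ s := fun h => huv (hus.trans h.symm)
          rw [hus, hSq's, hSq'v v hvs hvt]
          refine int_disj_bottom ?_
          simp only [hSn]
          have hbv := hbounds v (hmemI v hv hvs hvt)
          linarith [hbv.2]
      · by_cases hvt : v = t
        · rw [hvt, hSq't, hSq'v u hus hut, Set.inter_comm]
          refine int_disj_left ?_
          simp only [hTn]
          have hbv := hbounds u (hmemI u hu hus hut)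
          linarith [hbv.1]
        · by_cases hvs : v = s
          · rw [hvs, hSq's, hSq'v u hus hut, Set.inter_comm]
            refine int_disj_bottom ?_
            simp only [hSn]
            have hbv := hbounds u (hmemI u hu hus hut)
            linarith [hbv.2]
          · rw [hSq'v u hus hut, hSq'v v hvs hvt]
            exact hdisj u hu v hv huv
  · -- adjacency implies infinite contact
    intro u hu v hv hAdj
    rw [hGadj] at hAdj
    by_cases hut : u = t
    · by_cases hvs : v = s
      · rw [hut, hvs, hSq't, hSq's]
        exact hTnSn
      · have hvt : v ≠ t := by
          intro h
          rcases hAdj with hh | ⟨hh, _⟩ | ⟨_, hh⟩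
          · rw [hut, h] at hh
            exact H.loopless.irrefl t hh
          · exact hst (hh.symm.trans hut)
          · exact hvs hh
        have hH : H.Adj t v := by
          rcases hAdj with hh | ⟨hh, _⟩ | ⟨_, hh⟩
          · exact hut ▸ hh
          · exact absurd (hh.symm.trans hut) hst
          · exact absurd hh hvs
        rw [hut, hSq't, hSq'v v hvs hvt]
        exact keyT v hv hvs hvt hH
    · by_cases hus : u = s
      · by_cases hvt : v = t
        · rw [hus, hvt, hSq't, hSq's, Set.inter_comm]
          exact hTnSn
        · have hvs : v ≠ s := by
            intro h
            rcases hAdj with hh | ⟨_, hh⟩ | ⟨hh, _⟩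
            · rw [hus, h] at hh
              exact H.loopless.irrefl s hh
            · exact hvt hh
            · exact hst (hus.symm.trans hh)
          have hH : H.Adj s v := by
            rcases hAdj with hh | ⟨_, hh⟩ | ⟨hh, _⟩
            · exact hus ▸ hh
            · exact absurd hh hvt
            · exact absurd (hus.symm.trans hh) hst
          rw [hus, hSq's, hSq'v v hvs hvt]
          exact keyS v hv hvs hvt hH
      · have hH : H.Adj u v := by
          rcases hAdj with hh | ⟨hh, _⟩ | ⟨hh, _⟩
          · exact hh
          · exact absurd hh hus
          · exact absurd hh hut
        by_cases hvt : v = t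
        · rw [hvt, hSq't, hSq'v u hus hut, Set.inter_comm]
          exact keyT u hu hus hut (hvt ▸ hH).symm
        · by_cases hvs : v = s
          · rw [hvs, hSq's, hSq'v u hus hut, Set.inter_comm]
            exact keyS u hu hus hut (hvs ▸ hH).symm
          · rw [hSq'v u hus hut, hSq'v v hvs hvt]
            exact hadj u hu v hv hH
  · -- non-adjacent implies empty intersection
    intro u hu v hv huv hnAdj
    rw [hGadj] at hnAdj
    have hnH : ¬ H.Adj u v := fun h => hnAdj (Or.inl h)
    by_cases hut : u = t
    · by_cases hvs : v = s
      · exact absurd (Or.inr (Or.inr ⟨hut, hvs⟩)) hnAdj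
      · have hvt : v ≠ t := fun h => huv (hut.trans h.symm)
        rw [hut, hSq't, hSq'v v hvs hvt]
        exact keyT' v hv hvs hvt (fun h => hnH (hut.symm ▸ h))
    · by_cases hus : u = s
      · by_cases hvt : v = t
        · exact absurd (Or.inr (Or.inl ⟨hus, hvt⟩)) hnAdj
        · have hvs : v ≠ s := fun h => huv (hus.trans h.symm)
          rw [hus, hSq's, hSq'v v hvs hvt]
          exact keyS' v hv hvs hvt (fun h => hnH (hus.symm ▸ h))
      · by_cases hvt : v = t
        · rw [hvt, hSq't, hSq'v u hus hut, Set.inter_comm]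
          exact keyT' u hu hus hut (fun h => hnH (hvt.symm ▸ h.symm))
        · by_cases hvs : v = s
          · rw [hvs, hSq's, hSq'v u hus hut, Set.inter_comm]
            exact keyS' u hu hus hut (fun h => hnH (hvs.symm ▸ h.symm))
          · rw [hSq'v u hus hut, hSq'v v hvs hvt]
            exact hnadjE u hu v hv huv hnH
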